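/- Let (Ω, μ) be a probability space, J ∈ [0, 1], and m, b ≥ 1 integers. Write c_b = 1/2^b, P_b = c_b + (1 − c_b)·J, and P_{2b} = c_{2b} + (1 − c_{2b})·J with c_{2b} = 1/2^{2b}. Let X : Fin m → Ω → ℝ be random variables such that each X(i) takes values in {0, 1}, E[X(i)] = P_b for every i, and E[X(i)·X(j)] = P_{2b} for every i ≠ j. Define Ĵ_m = (∑_{i} X(i))/(m(1 − c_b)) − c_b/(1 − c_b). Then Var(Ĵ_m) = (1/m)·P_b(1 − P_b)/(1 − c_b)² + ((m − 1)/m)·(P_{2b} − P_b²)/(1 − c_b)². -/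

import Mathlib

open MeasureTheory ProbabilityTheory

/-- Equal-chunk specialization of Theorem 2: with `m` chunks of `b` bits each,
`c_b = 1/2^b`, `P_b = c_b + (1 − c_b)·J`, `P_{2b} = 1/2^{2b} + (1 − 1/2^{2b})·J`,
collision indicators `X i` with `E[X i] = P_b` and `E[X i · X j] = P_{2b}` for `i ≠ j`,
the estimator `Ĵ_m = (∑ X i)/(m(1 − c_b)) − c_b/(1 − c_b)` has variance
`(1/m)·P_b(1 − P_b)/(1 − c_b)² + ((m − 1)/m)·(P_{2b} − P_b²)/(1 − c_b)²`. -/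
theorem pbHash_variance_equal_chunks {Ω : Type*} [MeasurableSpace Ω]
    (μ : Measure Ω) [IsProbabilityMeasure μ]
    (J : ℝ) (hJ : J ∈ Set.Icc (0 : ℝ) 1) (m b : ℕ) (hm : 1 ≤ m) (hb : 1 ≤ b)
    (X : Fin m → Ω → ℝ) (hXmeas : ∀ i, Measurable (X i))
    (hX01 : ∀ i ω, X i ω = 0 ∨ X i ω = 1)
    (hXmean : ∀ i, ∫ ω, X i ω ∂μ = 1 / 2 ^ b + (1 - 1 / 2 ^ b) * J)
    (hXY : ∀ i j, i ≠ j →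
      ∫ ω, X i ω * X j ω ∂μ = 1 / 2 ^ (2 * b) + (1 - 1 / 2 ^ (2 * b)) * J) :
    variance (fun ω => (∑ i, X i ω) / ((m : ℝ) * (1 - 1 / (2 : ℝ) ^ b))
        - (1 / (2 : ℝ) ^ b) / (1 - 1 / (2 : ℝ) ^ b)) μ
      = (1 / (m : ℝ)) * ((1 / 2 ^ b + (1 - 1 / 2 ^ b) * J)
            * (1 - (1 / 2 ^ b + (1 - 1 / 2 ^ b) * J))) / (1 - 1 / (2 : ℝ) ^ b) ^ 2
        + (((m : ℝ) - 1) / (m : ℝ))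
            * ((1 / 2 ^ (2 * b) + (1 - 1 / 2 ^ (2 * b)) * J)
                - (1 / 2 ^ b + (1 - 1 / 2 ^ b) * J) ^ 2) / (1 - 1 / (2 : ℝ) ^ b) ^ 2 := by
  set c : ℝ := 1 / 2 ^ b with hc
  set P : ℝ := 1 / 2 ^ b + (1 - 1 / 2 ^ b) * J with hP
  set Q : ℝ := 1 / 2 ^ (2 * b) + (1 - 1 / 2 ^ (2 * b)) * J with hQ
  have hmne : (m : ℝ) ≠ 0 := by positivity
  have hcle : c ≤ 1 / 2 := by
    rw [hc]
    have : (2:ℝ) ≤ 2 ^ b := by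
      calc (2:ℝ) = 2 ^ 1 := (pow_one 2).symm
      _ ≤ 2 ^ b := by exact pow_le_pow_right₀ one_le_two hb
    rw [div_le_div_iff₀ (by positivity) (by norm_num)]
    linarith
  have h1c : (1 : ℝ) - c ≠ 0 := by linarith [hcle]
  set k : ℝ := (m : ℝ) * (1 - c) with hk
  have hkne : k ≠ 0 := mul_ne_zero hmne h1c
  set d : ℝ := c / (1 - c) with hd
  set S : Ω → ℝ := fun ω => ∑ i, X i ω with hS
  -- integrability
  have hXbd : ∀ i ω, ‖X i ω‖ ≤ 1 := by
    intro i ω; rcases hX01 i ω with h | h <;> simp [h]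
  have hXint : ∀ i, Integrable (X i) μ := fun i =>
    (integrable_const (1:ℝ)).mono' (hXmeas i).aestronglyMeasurable (ae_of_all _ (hXbd i))
  have hprodint : ∀ i j, Integrable (fun ω => X i ω * X j ω) μ := by
    intro i j
    refine (integrable_const (1:ℝ)).mono' ((hXmeas i).mul (hXmeas j)).aestronglyMeasurable
      (ae_of_all _ fun ω => ?_)
    calc ‖X i ω * X j ω‖ = ‖X i ω‖ * ‖X j ω‖ := norm_mul _ _
    _ ≤ 1 * 1 := mul_le_mul (hXbd i ω) (hXbd j ω) (norm_nonneg _) zero_le_one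
    _ = 1 := one_mul 1
  have hSint : Integrable S μ := integrable_finset_sum _ fun i _ => hXint i
  have hSmeas : Measurable S := by
    apply Finset.measurable_sum; exact fun i _ => hXmeas i
  -- E[S]
  have hES : ∫ ω, S ω ∂μ = (m : ℝ) * P := by
    rw [hS]
    rw [integral_finset_sum _ fun i _ => hXint i]
    simp [hXmean, hP, Finset.card_univ]
    ring
  -- E[X i * X j] for all i j
  have hdiag : ∀ i, ∫ ω, X i ω * X i ω ∂μ = P := by
    intro i
    have : (fun ω => X i ω * X i ω) = X i := by
      funext ω; rcases hX01 i ω with h | h <;> simp [h]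
    rw [this, hXmean]
  have hrow : ∀ i : Fin m, ∑ j, ∫ ω, X i ω * X j ω ∂μ = ((m : ℝ) - 1) * Q + P := by
    intro i
    have : ∀ j : Fin m, ∫ ω, X i ω * X j ω ∂μ = Q + if j = i then P - Q else 0 := by
      intro j
      by_cases h : j = i
      · subst h; simp [hdiag j]
      · rw [hXY i j (fun hh => h hh.symm)]; simp [h, hQ]
    rw [Finset.sum_congr rfl fun j _ => this j, Finset.sum_add_distrib,
      Finset.sum_ite_eq' Finset.univ i (fun _ => P - Q)]
    simp [Finset.card_univ]
    ring
  -- E[S^2]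
  have hSsqint : Integrable (fun ω => S ω * S ω) μ := by
    have : (fun ω => S ω * S ω) = fun ω => ∑ i, ∑ j, X i ω * X j ω := by
      funext ω; rw [hS]; rw [Finset.sum_mul_sum]
    rw [this]
    exact integrable_finset_sum _ fun i _ => integrable_finset_sum _ fun j _ => hprodint i j
  have hES2 : ∫ ω, S ω * S ω ∂μ = (m : ℝ) * (((m : ℝ) - 1) * Q + P) := by
    have h1 : (fun ω => S ω * S ω) = fun ω => ∑ i, ∑ j, X i ω * X j ω := by
      funext ω; rw [hS]; rw [Finset.sum_mul_sum]
    rw [h1, integral_finset_sum _ fun i _ => integrable_finset_sum _ fun j _ => hprodint i j]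
    rw [Finset.sum_congr rfl fun i _ => (integral_finset_sum _ fun j _ => hprodint i j)]
    rw [Finset.sum_congr rfl fun i _ => hrow i]
    simp [Finset.card_univ]
    ring
  -- the estimator
  set Y : Ω → ℝ := fun ω => S ω / k - d with hY
  have hYmem : MemLp Y 2 μ := by
    have hXm : ∀ i, MemLp (X i) 2 μ :=
      fun i => (memLp_top_of_bound (hXmeas i).aestronglyMeasurable 1
        (ae_of_all _ (hXbd i))).mono_exponent le_top
    have hSm : MemLp S 2 μ := memLp_finsetSum _ fun i _ => hXm i
    have : MemLp (fun ω => S ω / k) 2 μ := by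
      simpa [div_eq_inv_mul] using hSm.const_mul k⁻¹
    exact this.sub (memLp_const d)
  have hYint : Integrable Y μ := (hSint.div_const k).sub (integrable_const d)
  have hEY : ∫ ω, Y ω ∂μ = (m : ℝ) * P / k - d := by
    rw [hY]
    rw [integral_sub (hSint.div_const k) (integrable_const d), integral_div, hES,
      integral_const]
    simp
  have hY2eq : (fun ω => Y ω ^ 2)
      = fun ω => (S ω * S ω) * (1 / k ^ 2) - (2 * d / k) * S ω + d ^ 2 := by
    funext ω; rw [hY]; field_simp; ring
  have hEY2 : ∫ ω, Y ω ^ 2 ∂μ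
      = (m : ℝ) * (((m : ℝ) - 1) * Q + P) * (1 / k ^ 2) - (2 * d / k) * ((m : ℝ) * P) + d ^ 2 := by
    rw [hY2eq]
    have hA : Integrable (fun ω => S ω * S ω * (1 / k ^ 2) - 2 * d / k * S ω) μ :=
      (hSsqint.mul_const _).sub (hSint.const_mul _)
    have hB : Integrable (fun ω => S ω * S ω * (1 / k ^ 2)) μ := hSsqint.mul_const _
    have hC : Integrable (fun ω => 2 * d / k * S ω) μ := hSint.const_mul _
    rw [integral_add hA (integrable_const _), integral_sub hB hC,
      integral_mul_const, integral_const_mul, hES2, hES, integral_const]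
    simp
  have hvar := variance_eq_sub hYmem
  have hpow : (Y ^ 2 : Ω → ℝ) = fun ω => Y ω ^ 2 := rfl
  rw [hvar, hpow, hEY2]
  simp only [hEY]
  rw [hk, hd]
  have h2 : (1:ℝ) - c > 0 := by linarith [hcle]
  field_simp
  ring
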